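/- arXiv:2406.14276 — 2 statements merged into one kernel-verified Lean document; each statement's English description precedes it below -/
import Mathlib

section
/- Let A be a commutative multiplicative hyperring with identity that is not local, let Q be a strong 𝒞-hyperideal of A, and let u,v ∈ ℕ with u > v. Then Q is a (u−v+1,1)-absorbing prime hyperideal of A if and only if Q is a prime hyperideal of A. -/
/-- A commutative multiplicative hyperring with identity: `(A,+)` is a commutative group,
`∘ = hmul` is a commutative associative hyperoperation with nonempty values, satisfying
`x∘(y+z) ⊆ x∘y + x∘z`, `x∘(−y) = (−x)∘y = −(x∘y)`, and `a ∈ a∘1` for all `a`. -/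
class CommHyperring (A : Type*) [AddCommGroup A] [One A] where
  hmul : A → A → Set A
  hmul_nonempty : ∀ x y : A, (hmul x y).Nonempty
  hmul_comm : ∀ x y : A, hmul x y = hmul y x
  hmul_assoc : ∀ x y z : A, (⋃ a ∈ hmul y z, hmul x a) = ⋃ b ∈ hmul x y, hmul b z
  hmul_add : ∀ x y z : A, hmul x (y + z) ⊆ Set.image2 (· + ·) (hmul x y) (hmul x z)
  hmul_neg : ∀ x y : A, hmul x (-y) = Neg.neg '' hmul x y
  neg_hmul : ∀ x y : A, hmul (-x) y = Neg.neg '' hmul x y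
  one_mem : ∀ a : A, a ∈ hmul a 1

open CommHyperring

variable {A : Type*} [AddCommGroup A] [One A] [CommHyperring A]

/-- The hyperoperation extended to subsets: `X∘Y = ⋃_{x∈X, y∈Y} x∘y`. -/
def sMul (X Y : Set A) : Set A := ⋃ x ∈ X, ⋃ y ∈ Y, hmul x y

/-- The product `x₁∘⋯∘xₙ` of the members of a list. -/
def hProd : List A → Set A
  | [] => {1}
  | [a] => {a}
  | a :: l => ⋃ c ∈ hProd l, hmul a c

/-- `xⁿ = x∘⋯∘x` (`n` factors). -/
def hPow (a : A) (n : ℕ) : Set A := hProd (List.replicate n a)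

/-- `a` is a unit if `1 ∈ a∘b` for some `b`. -/
def IsUnitH (a : A) : Prop := ∃ b : A, (1 : A) ∈ hmul a b

/-- A hyperideal of `A`. -/
def IsHyperideal (B : Set A) : Prop :=
  B.Nonempty ∧ (∀ x ∈ B, ∀ y ∈ B, x - y ∈ B) ∧ ∀ r : A, ∀ x ∈ B, hmul r x ⊆ B

def IsProperHyperideal (B : Set A) : Prop := IsHyperideal B ∧ B ≠ Set.univ

/-- A prime hyperideal. -/
def IsPrimeHyperideal (B : Set A) : Prop :=
  IsProperHyperideal B ∧ ∀ x y : A, hmul x y ⊆ B → x ∈ B ∨ y ∈ B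

/-- The prime radical: the intersection of all prime hyperideals containing `B`
(`= A` if there are none). -/
def radH (B : Set A) : Set A := ⋂₀ {P : Set A | IsPrimeHyperideal P ∧ B ⊆ P}

/-- A `𝒞`-hyperideal: meets a finite product `⇒` contains it. -/
def IsCHyperideal (B : Set A) : Prop :=
  IsHyperideal B ∧ ∀ l : List A, l ≠ [] → (hProd l ∩ B).Nonempty → hProd l ⊆ B

def setAdd (X Y : Set A) : Set A := Set.image2 (· + ·) X Y

/-- The sum `C₁ + ⋯ + Cₙ` of the finite products coded by a list of lists. -/
def sumProds (L : List (List A)) : Set A := L.foldr (fun l S => setAdd (hProd l) S) {0}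

/-- A strong `𝒞`-hyperideal: meets a finite sum of finite products `⇒` contains it. -/
def IsStrongCHyperideal (B : Set A) : Prop :=
  IsHyperideal B ∧ ∀ L : List (List A), L ≠ [] → (∀ l ∈ L, l ≠ []) →
    (sumProds L ∩ B).Nonempty → sumProds L ⊆ B

/-- A `v`-absorbing hyperideal. -/
def IsNAbsorbing (Q : Set A) (v : ℕ) : Prop :=
  IsProperHyperideal Q ∧ ∀ l : List A, l.length = v + 1 → hProd l ⊆ Q →
    ∃ l', l'.Sublist l ∧ l'.length = v ∧ hProd l' ⊆ Q

/-- A `(u,v)`-absorbing hyperideal. -/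
def IsUVAbsorbing (Q : Set A) (u v : ℕ) : Prop :=
  IsProperHyperideal Q ∧ ∀ l : List A, l.length = u → (∀ x ∈ l, ¬IsUnitH x) → hProd l ⊆ Q →
    ∃ l', l'.Sublist l ∧ l'.length = v ∧ hProd l' ⊆ Q

/-- An `AB`-`(u,v)`-absorbing hyperideal. -/
def IsABUVAbsorbing (Q : Set A) (u v : ℕ) : Prop :=
  IsProperHyperideal Q ∧ ∀ l : List A, l.length = u → hProd l ⊆ Q →
    ∃ l', l'.Sublist l ∧ l'.length = v ∧ hProd l' ⊆ Q

/-- A `(u,v)`-absorbing prime hyperideal. -/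
def IsUVAbsorbingPrime (Q : Set A) (u v : ℕ) : Prop :=
  IsProperHyperideal Q ∧ ∀ l : List A, l.length = u → (∀ x ∈ l, ¬IsUnitH x) → hProd l ⊆ Q →
    hProd (l.take v) ⊆ Q ∨ hProd (l.drop v) ⊆ Q

/-- A maximal hyperideal. -/
def IsMaximalHyperideal (M : Set A) : Prop :=
  IsProperHyperideal M ∧ ∀ B : Set A, IsHyperideal B → M ⊂ B → B = Set.univ

/-- `A` is local if it has exactly one maximal hyperideal. -/
def IsLocalH (A : Type*) [AddCommGroup A] [One A] [CommHyperring A] : Prop :=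
  ∃! M : Set A, IsMaximalHyperideal M

/-- `P` is a prime hyperideal minimal over `Q`. -/
def MinimalPrimeOver (Q P : Set A) : Prop :=
  IsPrimeHyperideal P ∧ Q ⊆ P ∧
    ∀ P' : Set A, IsPrimeHyperideal P' → Q ⊆ P' → P' ⊆ P → P' = P

/-- `Iⁿ = ⋃ {x₁∘⋯∘xₙ : xᵢ ∈ I}`. -/
def idealPow (I : Set A) (n : ℕ) : Set A :=
  ⋃ l ∈ {l : List A | l.length = n ∧ ∀ x ∈ l, x ∈ I}, hProd l

/-- `I₁∘⋯∘Iₙ = ⋃ {x₁∘⋯∘xₙ : xᵢ ∈ Iᵢ}`. -/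
def idealProd (L : List (Set A)) : Set A :=
  ⋃ l ∈ {l : List A | List.Forall₂ (· ∈ ·) l L}, hProd l

/-- `Abs(Q)`: the minimal `v` such that `Q` is `v`-absorbing. -/
noncomputable def AbsN (Q : Set A) : ℕ := sInf {v : ℕ | IsNAbsorbing Q v}

/-- `abs(Q)`: the minimal `v` such that `Q` is `(Abs(Q)+1, v)`-absorbing. -/
noncomputable def absN (Q : Set A) : ℕ := sInf {v : ℕ | IsUVAbsorbing Q (AbsN Q + 1) v}

/-- A primary hyperideal. -/
def IsPrimaryHyperideal (Q : Set A) : Prop :=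
  IsProperHyperideal Q ∧ ∀ x y : A, hmul x y ⊆ Q → x ∈ Q ∨ ∃ t : ℕ, 1 ≤ t ∧ hPow y t ⊆ Q

/-- `A` is a hyperfield if every nonzero element is a unit. -/
def IsHyperfield (A : Type*) [AddCommGroup A] [One A] [CommHyperring A] : Prop :=
  ∀ x : A, x ≠ 0 → IsUnitH x

/-- `(Q : x) = {a : a∘x ⊆ Q}`. -/
def colonH (Q : Set A) (x : A) : Set A := {a : A | hmul a x ⊆ Q}

/-- `J(A)`: the intersection of all maximal hyperideals of `A`. -/
def JacobsonH (A : Type*) [AddCommGroup A] [One A] [CommHyperring A] : Set A :=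
  ⋂₀ {M : Set A | IsMaximalHyperideal M}

lemma hProd_nil' : hProd ([] : List A) = {1} := rfl
lemma hProd_singleton' (a : A) : hProd [a] = {a} := rfl
lemma hProd_cons_cons (a b : A) (l : List A) :
    hProd (a :: b :: l) = ⋃ c ∈ hProd (b :: l), hmul a c := rfl

lemma hProd_cons_ne (a : A) {l : List A} (h : l ≠ []) :
    hProd (a :: l) = ⋃ c ∈ hProd l, hmul a c := by
  cases l with
  | nil => exact absurd rfl h
  | cons b t => exact hProd_cons_cons a b t

lemma ideal_zero_mem {Q : Set A} (hQ : IsHyperideal Q) : (0 : A) ∈ Q := by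
  obtain ⟨⟨q, hq⟩, hsub, _⟩ := hQ
  simpa using hsub q hq q hq

lemma ideal_add_mem {Q : Set A} (hQ : IsHyperideal Q) {p q : A}
    (hp : p ∈ Q) (hq : q ∈ Q) : p + q ∈ Q := by
  have h0 : (0 : A) ∈ Q := ideal_zero_mem hQ
  have h1 : (0 : A) - q ∈ Q := hQ.2.1 0 h0 q hq
  have := hQ.2.1 p hp (0 - q) h1
  simpa [sub_sub_cancel] using this

lemma ideal_hmul_subset {Q : Set A} (hQ : IsHyperideal Q) {q : A} (hq : q ∈ Q) (r : A) :
    hmul q r ⊆ Q := by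
  rw [hmul_comm]; exact hQ.2.2 r q hq

/-- If `t∘w ⊆ Q` with `w` a unit then `t ∈ Q`. -/
lemma mem_of_hmul_unit_subset {Q : Set A} (hQ : IsHyperideal Q) {t w : A}
    (hw : IsUnitH w) (h : hmul t w ⊆ Q) : t ∈ Q := by
  obtain ⟨w', hw'⟩ := hw
  have ht1 : t ∈ hmul t 1 := one_mem t
  have hsub : hmul t 1 ⊆ ⋃ c ∈ hmul w w', hmul t c := by
    intro s hs
    exact Set.mem_biUnion hw' hs
  have heq : (⋃ c ∈ hmul w w', hmul t c) = ⋃ s ∈ hmul t w, hmul s w' :=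
    hmul_assoc t w w'
  have : t ∈ ⋃ s ∈ hmul t w, hmul s w' := heq ▸ hsub ht1
  obtain ⟨s, hs, hts⟩ := Set.mem_iUnion₂.mp this
  exact ideal_hmul_subset hQ (h hs) w' hts

/-- An ideal containing a unit is everything. -/
lemma ideal_eq_univ_of_unit {B : Set A} (hB : IsHyperideal B) {s : A}
    (hs : s ∈ B) (hu : IsUnitH s) : B = Set.univ := by
  obtain ⟨c, hc⟩ := hu
  have h1 : (1 : A) ∈ B := ideal_hmul_subset hB hs c hc
  ext a
  simp only [Set.mem_univ, iff_true]
  exact hB.2.2 a 1 h1 (one_mem a)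

/-- A proper hyperideal contains no units. -/
lemma not_unit_of_mem_proper {B : Set A} (hB : IsProperHyperideal B) {s : A}
    (hs : s ∈ B) : ¬IsUnitH s := fun hu => hB.2 (ideal_eq_univ_of_unit hB.1 hs hu)

lemma neg_not_unit {a : A} (ha : ¬IsUnitH a) : ¬IsUnitH (-a) := by
  rintro ⟨c, hc⟩
  rw [neg_hmul] at hc
  obtain ⟨d, hd, hd1⟩ := hc
  refine ha ⟨-c, ?_⟩
  rw [hmul_neg]
  exact ⟨d, hd, hd1⟩

/-- If `A` is not local then some two nonunits sum to a unit
(given that a proper hyperideal exists). -/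
lemma exists_nonunits_add_unit {Q : Set A} (hQ : IsProperHyperideal Q)
    (hA : ¬IsLocalH A) : ∃ a b : A, ¬IsUnitH a ∧ ¬IsUnitH b ∧ IsUnitH (a + b) := by
  by_contra hc
  push_neg at hc
  apply hA
  set N : Set A := {a : A | ¬IsUnitH a} with hN
  have hNid : IsHyperideal N := by
    refine ⟨?_, ?_, ?_⟩
    · obtain ⟨q, hq⟩ := hQ.1.1
      exact ⟨q, not_unit_of_mem_proper hQ hq⟩
    · intro x hx y hy
      have : ¬IsUnitH (x + -y) := hc x (-y) hx (neg_not_unit hy)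
      exact (by simpa [sub_eq_add_neg] using this : ¬IsUnitH (x - y))
    · intro r x hx s hs
      rintro ⟨t, ht⟩
      -- 1 ∈ s∘t, s ∈ r∘x = x∘r ⟹ 1 ∈ x∘c for some c
      have hs' : s ∈ hmul x r := by rwa [hmul_comm] at hs
      have : (1 : A) ∈ ⋃ b ∈ hmul x r, hmul b t := Set.mem_biUnion hs' ht
      rw [← hmul_assoc] at this
      obtain ⟨c, _, hc1⟩ := Set.mem_iUnion₂.mp this
      exact hx ⟨c, hc1⟩
  have h1 : IsUnitH (1 : A) := ⟨1, one_mem 1⟩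
  have hNproper : IsProperHyperideal N := by
    refine ⟨hNid, ?_⟩
    intro h
    have : (1 : A) ∈ N := h ▸ Set.mem_univ 1
    exact this h1
  have hNmax : IsMaximalHyperideal N := by
    refine ⟨hNproper, ?_⟩
    intro B hB hNB
    obtain ⟨s, hsB, hsN⟩ := Set.exists_of_ssubset hNB
    have hsu : IsUnitH s := not_not.mp hsN
    exact ideal_eq_univ_of_unit hB hsB hsu
  refine ⟨N, hNmax, ?_⟩
  intro M hM
  have hMN : M ⊆ N := fun s hs => not_unit_of_mem_proper hM.1 hs
  by_contra hne
  have hss : M ⊂ N := hMN.ssubset_of_ne hne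
  have := hM.2 N hNid hss
  exact hNproper.2 this

/-- If `hProd l ⊆ Q` then `hProd (a :: l) ⊆ Q`. -/
lemma hProd_cons_subset {Q : Set A} (hQ : IsHyperideal Q) (a : A) {l : List A}
    (h : l ≠ []) (hl : hProd l ⊆ Q) : hProd (a :: l) ⊆ Q := by
  rw [hProd_cons_ne a h]
  intro s hs
  obtain ⟨c, hc, hsc⟩ := Set.mem_iUnion₂.mp hs
  exact ideal_hmul_subset hQ (hl hc) a (by rwa [hmul_comm] at hsc)

/-- `hProd (l ++ [c]) = ⋃ t ∈ hProd l, t∘c` for `l ≠ []`. -/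
lemma hProd_append_singleton (c : A) : ∀ (l : List A), l ≠ [] →
    hProd (l ++ [c]) = ⋃ t ∈ hProd l, hmul t c := by
  intro l
  induction l with
  | nil => intro h; exact absurd rfl h
  | cons a l ih =>
    intro _
    cases l with
    | nil =>
      simp only [List.nil_append, List.cons_append]
      rw [hProd_cons_cons, hProd_singleton', hProd_singleton']
      simp
    | cons b t =>
      have hne : b :: t ≠ [] := by simp
      have h2 : (b :: t) ++ [c] ≠ [] := by simp
      rw [List.cons_append, hProd_cons_ne a h2, ih hne]
      ext s
      simp only [Set.mem_iUnion]
      constructor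
      · rintro ⟨d, ⟨t', ht', hdt'⟩, hsd⟩
        have : s ∈ ⋃ d ∈ hmul t' c, hmul a d := Set.mem_biUnion hdt' hsd
        rw [hmul_assoc] at this
        obtain ⟨e, he, hse⟩ := Set.mem_iUnion₂.mp this
        refine ⟨e, ⟨?_, hse⟩⟩
        rw [hProd_cons_cons]
        exact Set.mem_biUnion ht' he
      · rintro ⟨e, ⟨he, hse⟩⟩
        rw [hProd_cons_cons] at he
        obtain ⟨t', ht', het'⟩ := Set.mem_iUnion₂.mp he
        have : s ∈ ⋃ e ∈ hmul a t', hmul e c := Set.mem_biUnion het' hse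
        rw [← hmul_assoc] at this
        obtain ⟨d, hd, hsd⟩ := Set.mem_iUnion₂.mp this
        exact ⟨d, ⟨t', ht', hd⟩, hsd⟩

/-- If `x∘y ⊆ Q` then `hProd (y :: x :: z) ⊆ Q`. -/
lemma hProd_two_head_subset {Q : Set A} (hQ : IsHyperideal Q) {x y : A}
    (hxy : hmul x y ⊆ Q) (z : List A) : hProd (y :: x :: z) ⊆ Q := by
  cases z with
  | nil =>
    rw [hProd_cons_cons, hProd_singleton']
    intro s hs
    obtain ⟨c, hc, hsc⟩ := Set.mem_iUnion₂.mp hs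
    rw [Set.mem_singleton_iff] at hc
    subst hc
    exact hxy (by rwa [hmul_comm] at hsc)
  | cons d t =>
    rw [hProd_cons_cons, hProd_cons_ne x (by simp : d :: t ≠ [])]
    intro s hs
    obtain ⟨c, hc, hsc⟩ := Set.mem_iUnion₂.mp hs
    obtain ⟨d', hd', hcd'⟩ := Set.mem_iUnion₂.mp hc
    have : s ∈ ⋃ c ∈ hmul x d', hmul y c := Set.mem_biUnion hcd' hsc
    rw [hmul_assoc] at this
    obtain ⟨b, hb, hsb⟩ := Set.mem_iUnion₂.mp this
    have hbQ : b ∈ Q := hxy (by rwa [hmul_comm] at hb)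
    exact ideal_hmul_subset hQ hbQ d' hsb

/-- The descent: if every product of `x` with `m` nonunits lands in `Q`,
and some nonunits sum to a unit, then `x ∈ Q`. -/
lemma descent {Q : Set A} (hQ : IsHyperideal Q) {x a b : A}
    (ha : ¬IsUnitH a) (hb : ¬IsUnitH b) (hab : IsUnitH (a + b)) :
    ∀ m : ℕ, (∀ z : List A, z.length = m → (∀ t ∈ z, ¬IsUnitH t) →
      hProd (x :: z) ⊆ Q) → x ∈ Q := by
  intro m
  induction m with
  | zero =>
    intro h
    have := h [] rfl (by simp)
    rw [hProd_singleton'] at this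
    exact this rfl
  | succ k ih =>
    intro h
    apply ih
    intro z hz hzu
    intro t ht
    have hza : ∀ c : A, ¬IsUnitH c → hmul t c ⊆ Q := by
      intro c hcu
      have hsubc : hProd ((x :: z) ++ [c]) ⊆ Q := by
        rw [List.cons_append]
        exact h (z ++ [c]) (by simp [hz]) (by
          intro s hs
          rcases List.mem_append.mp hs with h' | h'
          · exact hzu s h'
          · simp at h'; subst h'; exact hcu)
      rw [hProd_append_singleton c (x :: z) (by simp)] at hsubc
      intro s hs
      exact hsubc (Set.mem_biUnion ht hs)
    have hta : hmul t a ⊆ Q := hza a ha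
    have htb : hmul t b ⊆ Q := hza b hb
    have htab : hmul t (a + b) ⊆ Q := by
      intro s hs
      obtain ⟨p, hp, q, hq, hpq⟩ := hmul_add t a b hs
      exact hpq ▸ ideal_add_mem hQ (hta hp) (htb hq)
    exact mem_of_hmul_unit_subset hQ hab htab

/-- for a strong `𝒞`-hyperideal `Q` of a non-local hyperring and
`u > v`, `Q` is `(u-v+1,1)`-absorbing prime iff `Q` is prime. -/
theorem uv_absorbing_prime_iff_prime (hA : ¬IsLocalH A) (Q : Set A)
    (hQ : IsStrongCHyperideal Q) (u v : ℕ) (hv : 1 ≤ v) (hvu : v < u) :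
    IsUVAbsorbingPrime Q (u - v + 1) 1 ↔ IsPrimeHyperideal Q := by
  constructor
  · rintro ⟨hprop, habs⟩
    refine ⟨hprop, ?_⟩
    intro x y hxy
    by_cases hxu : IsUnitH x
    · exact Or.inr (mem_of_hmul_unit_subset hprop.1 hxu (by rwa [hmul_comm] at hxy))
    by_cases hyu : IsUnitH y
    · exact Or.inl (mem_of_hmul_unit_subset hprop.1 hyu hxy)
    by_cases hall : ∀ z : List A, z.length = u - v - 1 →
        (∀ t ∈ z, ¬IsUnitH t) → hProd (x :: z) ⊆ Q
    · obtain ⟨a, b, ha, hb, hab⟩ := exists_nonunits_add_unit hprop hA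
      exact Or.inl (descent hprop.1 ha hb hab (u - v - 1) hall)
    · push_neg at hall
      obtain ⟨z, hzlen, hzu, hznot⟩ := hall
      have hlen : (y :: x :: z).length = u - v + 1 := by
        simp only [List.length_cons, hzlen]; omega
      have hnu : ∀ t ∈ y :: x :: z, ¬IsUnitH t := by
        intro t ht
        rcases List.mem_cons.mp ht with h' | h'
        · exact h' ▸ hyu
        rcases List.mem_cons.mp h' with h'' | h''
        · exact h'' ▸ hxu
        · exact hzu t h''
      have hsub : hProd (y :: x :: z) ⊆ Q := hProd_two_head_subset hprop.1 hxy z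
      rcases habs _ hlen hnu hsub with h1 | h1
      · right
        have : hProd [y] ⊆ Q := by simpa using h1
        rw [hProd_singleton'] at this
        exact this rfl
      · exact absurd (by simpa using h1) hznot
  · rintro ⟨hprop, hprime⟩
    refine ⟨hprop, ?_⟩
    intro l hlen _ hsub
    match l, hlen with
    | a :: t, hlen =>
      have htne : t ≠ [] := by
        intro h
        subst h
        simp at hlen
        omega
      by_cases hts : hProd t ⊆ Q
      · right; simpa using hts
      · left
        obtain ⟨c, hc, hcQ⟩ := Set.not_subset.mp hts
        have hac : hmul a c ⊆ Q := by
          intro s hs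
          apply hsub
          rw [hProd_cons_ne a htne]
          exact Set.mem_biUnion hc hs
        rcases hprime a c hac with h' | h'
        · intro s hs
          simp only [List.take_succ_cons, List.take_zero] at hs ⊢
          rw [hProd_singleton'] at hs
          exact hs ▸ h'
        · exact absurd h' hcQ
end

section
/- Let A be a commutative multiplicative hyperring with identity, let u,v ∈ ℕ with u > v ≥ 2, let Q be a (u,v)-absorbing prime hyperideal of A, and let x ∈ A∖(Q ∪ U(A)). Then (Q : x) is a (u−1,v−1)-absorbing prime hyperideal of A. -/
open CommHyperring

variable {A : Type*} [AddCommGroup A] [One A] [CommHyperring A]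

lemma hProd_cons {a : A} {l : List A} (h : l ≠ []) :
    hProd (a :: l) = ⋃ c ∈ hProd l, hmul a c := by
  cases l with
  | nil => exact absurd rfl h
  | cons b t => rfl

lemma hProd_swap (a b : A) (l : List A) :
    hProd (a :: b :: l) = hProd (b :: a :: l) := by
  cases l with
  | nil =>
    show ⋃ c ∈ hProd [b], hmul a c = ⋃ c ∈ hProd [a], hmul b c
    simp [hProd, hmul_comm]
  | cons d t =>
    have key : ∀ e : A, (⋃ c ∈ hmul b e, hmul a c) = ⋃ c ∈ hmul a e, hmul b c := by
      intro e
      rw [hmul_assoc a b e, hmul_comm a b, ← hmul_assoc b a e]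
    calc hProd (a :: b :: d :: t)
        = ⋃ c ∈ (⋃ e ∈ hProd (d :: t), hmul b e), hmul a c := by
          rw [hProd_cons (l := b :: d :: t) (by simp), hProd_cons (l := d :: t) (by simp)]
      _ = ⋃ e ∈ hProd (d :: t), ⋃ c ∈ hmul b e, hmul a c := by
          ext z; simp only [Set.mem_iUnion]; tauto
      _ = ⋃ e ∈ hProd (d :: t), ⋃ c ∈ hmul a e, hmul b c := by
          simp only [key]
      _ = ⋃ c ∈ (⋃ e ∈ hProd (d :: t), hmul a e), hmul b c := by
          ext z; simp only [Set.mem_iUnion]; tauto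
      _ = hProd (b :: a :: d :: t) := by
          rw [hProd_cons (l := a :: d :: t) (by simp), hProd_cons (l := d :: t) (by simp)]

lemma hProd_perm : ∀ {l l' : List A}, l.Perm l' → hProd l = hProd l' := by
  intro l l' p
  induction p with
  | nil => rfl
  | cons a p ih =>
    rename_i l₁ l₂
    cases l₁ with
    | nil => rw [p.symm.eq_nil]
    | cons c t =>
      have h₂ : l₂ ≠ [] := fun h => by simp [h] at p
      rw [hProd_cons (List.cons_ne_nil c t), hProd_cons h₂, ih]
  | swap a b l => exact hProd_swap b a l
  | trans _ _ ih1 ih2 => exact ih1.trans ih2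

lemma hProd_cons_subset_iff {Q : Set A} {x : A} {l : List A} (hl : l ≠ []) :
    hProd (x :: l) ⊆ Q ↔ hProd l ⊆ colonH Q x := by
  rw [hProd_cons hl]
  simp only [Set.iUnion_subset_iff]
  constructor
  · intro h c hc
    have h2 : hmul x c ⊆ Q := h c hc
    rw [hmul_comm x c] at h2
    exact h2
  · intro h c hc
    have h2 : hmul c x ⊆ Q := h hc
    rw [hmul_comm c x] at h2
    exact h2

/-- if `Q` is `(u,v)`-absorbing prime with `u > v ≥ 2` and
`x ∈ A∖(Q ∪ U(A))`, then `(Q : x)` is `(u-1,v-1)`-absorbing prime. -/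
theorem colon_uv_absorbing_prime (u v : ℕ) (h2v : 2 ≤ v) (hvu : v < u) (Q : Set A)
    (habs : IsUVAbsorbingPrime Q u v) (x : A) (hxQ : x ∉ Q) (hxu : ¬IsUnitH x) :
    IsUVAbsorbingPrime (colonH Q x) (u - 1) (v - 1) := by
  obtain ⟨⟨hQI, hQp⟩, hQabs⟩ := habs
  have hQsub : Q ⊆ colonH Q x := by
    intro q hq c hc
    rw [hmul_comm q x] at hc
    exact hQI.2.2 x q hq hc
  constructor
  · refine ⟨⟨?_, ?_, ?_⟩, ?_⟩
    · obtain ⟨b, hb⟩ := hQI.1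
      have h0 : (0 : A) ∈ Q := by simpa using hQI.2.1 b hb b hb
      exact ⟨0, hQsub h0⟩
    · intro a ha b hb z hz
      have : hmul (a - b) x = hmul x (a + (-b)) := by rw [hmul_comm, sub_eq_add_neg]
      rw [this] at hz
      obtain ⟨p, hp, q, hq, hpq⟩ := hmul_add x a (-b) hz
      rw [hmul_neg x b] at hq
      obtain ⟨q', hq', rfl⟩ := hq
      have hpQ : p ∈ Q := by
        have haQ : hmul a x ⊆ Q := ha
        rw [hmul_comm a x] at haQ
        exact haQ hp
      have hqQ : q' ∈ Q := by
        have hbQ : hmul b x ⊆ Q := hb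
        rw [hmul_comm b x] at hbQ
        exact hbQ hq'
      have hsubQ : p - q' ∈ Q := hQI.2.1 p hpQ q' hqQ
      have hz' : z = p + -q' := hpq.symm
      rw [hz', ← sub_eq_add_neg]
      exact hsubQ
    · intro r a ha c hc z hz
      have h1 : z ∈ ⋃ b ∈ hmul r a, hmul b x := Set.mem_biUnion hc hz
      rw [← hmul_assoc r a x] at h1
      obtain ⟨d, hd, hz'⟩ := Set.mem_iUnion₂.mp h1
      have hdQ : d ∈ Q := ha hd
      exact hQI.2.2 r d hdQ hz'
    · intro h
      have h1 : (1 : A) ∈ colonH Q x := h ▸ Set.mem_univ 1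
      have hx1 : x ∈ hmul (1 : A) x := by rw [hmul_comm]; exact one_mem x
      exact hxQ (h1 hx1)
  · intro l hlen hnu hsub
    have hlne : l ≠ [] := by
      intro h; rw [h] at hlen; simp at hlen; omega
    set t := l.take (v - 1) with ht
    set d := l.drop (v - 1) with hd
    have htlen : t.length = v - 1 := by
      rw [ht, List.length_take, hlen]; omega
    have htne : t ≠ [] := by
      intro h; rw [h] at htlen; simp at htlen; omega
    have hperm : (x :: l).Perm (t ++ x :: d) := by
      have := List.perm_middle (a := x) (l₁ := t) (l₂ := d)
      rw [ht, hd, List.take_append_drop] at this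
      exact this.symm
    have hxl : hProd (x :: l) ⊆ Q := (hProd_cons_subset_iff hlne).mpr hsub
    have hl'len : (t ++ x :: d).length = u := by
      have := hperm.length_eq
      simp only [List.length_cons, hlen] at this
      omega
    have hl'nu : ∀ y ∈ t ++ x :: d, ¬IsUnitH y := by
      intro y hy
      have hyx : y ∈ x :: l := (hperm.mem_iff).mpr hy
      rw [List.mem_cons] at hyx
      rcases hyx with h | h
      · exact h ▸ hxu
      · exact hnu y h
    have hl'sub : hProd (t ++ x :: d) ⊆ Q := by
      rw [← hProd_perm hperm]; exact hxl
    rcases hQabs (t ++ x :: d) hl'len hl'nu hl'sub with hL | hR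
    · left
      have htake : (t ++ x :: d).take v = t ++ [x] := by
        rw [List.take_append, htlen]
        have h1 : v - (v - 1) = 1 := by omega
        rw [h1]
        have h2 : List.take v t = t := List.take_of_length_le (by omega)
        rw [h2]
        rfl
      rw [htake] at hL
      have hperm2 : (x :: t).Perm (t ++ [x]) := by
        have := List.perm_middle (a := x) (l₁ := t) (l₂ := ([] : List A))
        simpa using this.symm
      rw [← hProd_perm hperm2] at hL
      exact (hProd_cons_subset_iff htne).mp hL
    · right
      have hdrop : (t ++ x :: d).drop v = d := by
        rw [List.drop_append, htlen]
        have h1 : v - (v - 1) = 1 := by omega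
        rw [h1]
        have h2 : List.drop v t = [] := List.drop_of_length_le (by omega)
        rw [h2]
        rfl
      rw [hdrop] at hR
      exact hR.trans hQsub
end
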